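/- If U is a rank-ρ-saturating [n,k]_{q^m/q} system with q > 2, then n ≥ ⌈mk/ρ⌉ - m + ρ. -/

import Mathlib

/-- `U` covers with radius `r`: every vector of `F_{q^m}^k` lies in the `F_{q^m}`-span
of an `F_q`-subspace of `U` of `F_q`-dimension at most `r`. -/
def RkCovers (K : Type*) {L : Type*} [Field K] [Field L] [Algebra K L]
    {ι : Type*} (U : Submodule K (ι → L)) (r : ℕ) : Prop :=
  ∀ v : ι → L, ∃ S : Submodule K (ι → L), S ≤ U ∧ Module.finrank K S ≤ r ∧
    v ∈ Submodule.span L (S : Set (ι → L))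

/-- `U` is rank-`ρ`-saturating: it covers with radius `ρ` and `ρ` is minimal. -/
def IsRankSat (K : Type*) {L : Type*} [Field K] [Field L] [Algebra K L]
    {ι : Type*} (U : Submodule K (ι → L)) (ρ : ℕ) : Prop :=
  RkCovers K U ρ ∧ ∀ r < ρ, ¬ RkCovers K U r

/-- `s_{q^m/q}(k, ρ)`: the minimal `F_q`-dimension of a rank-`ρ`-saturating
`[n,k]_{q^m/q}` system in `F_{q^m}^k`. -/
noncomputable def sMin (K L : Type*) [Field K] [Field L] [Algebra K L] (k ρ : ℕ) : ℕ :=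
  sInf {n : ℕ | ∃ U : Submodule K (Fin k → L),
    Module.finrank K U = n ∧ Submodule.span L (U : Set (Fin k → L)) = ⊤ ∧
      IsRankSat K U ρ}

open Module Submodule

set_option maxHeartbeats 1000000
set_option synthInstance.maxHeartbeats 400000

lemma sat_aux_step {q a : ℕ} (hq : 3 ≤ q) (ha : 1 ≤ a) :
    a * q * (a * q + 1) ≤ (a + 1) * (a * q - 1) * q := by
  have h1 : 1 ≤ a * q := le_trans ha (Nat.le_mul_of_pos_right a (by omega))
  zify [h1]
  nlinarith [mul_le_mul_of_nonneg_left (by omega : (3:ℤ) ≤ q) (by positivity : (0:ℤ) ≤ (a:ℤ) * q), (by positivity : (0:ℤ) < (a:ℤ) * q)]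

lemma sat_key {q : ℕ} (hq : 3 ≤ q) (ρ : ℕ) :
    q ^ (∑ j ∈ Finset.range ρ, (j + 1)) * (q ^ ρ + 1) ≤
      2 * (∏ j ∈ Finset.range ρ, (q ^ (j + 1) - 1)) * q ^ ρ := by
  induction ρ with
  | zero => simp
  | succ ρ ih =>
    rw [Finset.sum_range_succ, Finset.prod_range_succ]
    have step := sat_aux_step hq (Nat.one_le_two_pow.trans
      (Nat.pow_le_pow_left (by omega) ρ) : 1 ≤ q ^ ρ)
    calc q ^ (∑ j ∈ Finset.range ρ, (j + 1) + (ρ + 1)) * (q ^ (ρ + 1) + 1)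
        = q ^ (∑ j ∈ Finset.range ρ, (j + 1)) * (q ^ ρ * q * (q ^ ρ * q + 1)) := by
          rw [pow_add, pow_succ]; ring
      _ ≤ q ^ (∑ j ∈ Finset.range ρ, (j + 1)) * ((q ^ ρ + 1) * (q ^ ρ * q - 1) * q) := by
          exact mul_le_mul_right step _
      _ = (q ^ (∑ j ∈ Finset.range ρ, (j + 1)) * (q ^ ρ + 1)) * ((q ^ (ρ + 1) - 1) * q) := by
          rw [pow_succ]; ring
      _ ≤ (2 * (∏ j ∈ Finset.range ρ, (q ^ (j + 1) - 1)) * q ^ ρ) * ((q ^ (ρ + 1) - 1) * q) := by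
          gcongr
      _ = 2 * ((∏ j ∈ Finset.range ρ, (q ^ (j + 1) - 1)) * (q ^ (ρ + 1) - 1)) * q ^ (ρ + 1) := by
          rw [pow_succ]; ring

lemma sat_sum_sum (ρ : ℕ) :
    (∑ j ∈ Finset.range ρ, j) + (∑ j ∈ Finset.range ρ, (j + 1)) = ρ * ρ := by
  induction ρ with
  | zero => simp
  | succ ρ ih =>
    rw [Finset.sum_range_succ, Finset.sum_range_succ]
    nlinarith [ih]

lemma sat_prod_lower {q : ℕ} (hq : 3 ≤ q) (ρ : ℕ) :
    q ^ (ρ * ρ) * (q ^ ρ + 1) ≤ 2 * (∏ i ∈ Finset.range ρ, (q ^ ρ - q ^ i)) * q ^ ρ := by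
  have hfac : ∀ i ∈ Finset.range ρ, q ^ ρ - q ^ i = q ^ i * (q ^ (ρ - i) - 1) := by
    intro i hi
    rw [Finset.mem_range] at hi
    rw [Nat.mul_sub, mul_one, ← pow_add]
    congr 2
    omega
  rw [Finset.prod_congr rfl hfac, Finset.prod_mul_distrib, Finset.prod_pow_eq_pow_sum]
  have hrefl : ∏ i ∈ Finset.range ρ, (q ^ (ρ - i) - 1)
      = ∏ j ∈ Finset.range ρ, (q ^ (j + 1) - 1) := by
    rw [← Finset.prod_range_reflect (fun j => q ^ (j + 1) - 1) ρ]
    refine Finset.prod_congr rfl fun i hi => ?_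
    rw [Finset.mem_range] at hi
    congr 2
    omega
  rw [hrefl]
  calc q ^ (ρ * ρ) * (q ^ ρ + 1)
      = q ^ (∑ i ∈ Finset.range ρ, i) * (q ^ (∑ j ∈ Finset.range ρ, (j + 1)) * (q ^ ρ + 1)) := by
        rw [← mul_assoc, ← pow_add, sat_sum_sum]
    _ ≤ q ^ (∑ i ∈ Finset.range ρ, i) * (2 * (∏ j ∈ Finset.range ρ, (q ^ (j + 1) - 1)) * q ^ ρ) := by
        exact mul_le_mul_right (sat_key hq ρ) _
    _ = 2 * (q ^ (∑ i ∈ Finset.range ρ, i) * ∏ j ∈ Finset.range ρ, (q ^ (j + 1) - 1)) * q ^ ρ := by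
        ring

lemma sat_combine {q m k n ρ N c : ℕ} (hq : 3 ≤ q)
    (h1 : q ^ (m * k) ≤ N * q ^ (m * ρ))
    (h2 : N * c ≤ q ^ (n * ρ))
    (h3 : q ^ (ρ * ρ) * (q ^ ρ + 1) ≤ 2 * c * q ^ ρ) :
    m * k + ρ * ρ ≤ n * ρ + m * ρ := by
  by_contra hcon
  push_neg at hcon
  have h0 : 1 ≤ q := by omega
  have hA : 0 < q ^ (n * ρ + m * ρ + ρ) := Nat.pow_pos (by omega)
  have key : 3 * q ^ (n * ρ + m * ρ + ρ) ≤ 2 * q ^ (n * ρ + m * ρ + ρ) := by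
    calc 3 * q ^ (n * ρ + m * ρ + ρ) ≤ q * q ^ (n * ρ + m * ρ + ρ) := by gcongr
      _ = q ^ (n * ρ + m * ρ + ρ + 1) := by rw [pow_succ]; ring
      _ ≤ q ^ (m * k + ρ * ρ + ρ) := Nat.pow_le_pow_right h0 (by omega)
      _ = q ^ (m * k) * (q ^ (ρ * ρ) * q ^ ρ) := by rw [pow_add, pow_add]; ring
      _ ≤ q ^ (m * k) * (q ^ (ρ * ρ) * (q ^ ρ + 1)) := by gcongr; omega
      _ ≤ q ^ (m * k) * (2 * c * q ^ ρ) := by gcongr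
      _ ≤ (N * q ^ (m * ρ)) * (2 * c * q ^ ρ) := by gcongr
      _ = 2 * (N * c) * (q ^ (m * ρ) * q ^ ρ) := by ring
      _ ≤ 2 * q ^ (n * ρ) * (q ^ (m * ρ) * q ^ ρ) := by gcongr
      _ = 2 * q ^ (n * ρ + m * ρ + ρ) := by rw [pow_add, pow_add]; ring
  omega


lemma sat_span_coe_range {R M : Type*} [Ring R] [AddCommGroup M] [Module R M]
    (S : Submodule R M) {ι : Type*} (g : ι → S) :
    Submodule.span R (Set.range fun i => ((g i : M))) =
      Submodule.map S.subtype (Submodule.span R (Set.range g)) := by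
  rw [Submodule.map_span, ← Set.range_comp]
  rfl

lemma sat_exists_ge_finrank_eq {K V : Type*} [Field K] [AddCommGroup V] [Module K V]
    [FiniteDimensional K V] (j : ℕ) :
    ∀ W : Submodule K V, finrank K W + j ≤ finrank K V →
      ∃ W' : Submodule K V, W ≤ W' ∧ finrank K W' = finrank K W + j := by
  induction j with
  | zero => exact fun W _ => ⟨W, le_rfl, by simp⟩
  | succ j ih =>
    intro W hW
    have hlt : finrank K W < finrank K V := by omega
    obtain ⟨x, hx⟩ := Submodule.exists_of_finrank_lt W hlt
    have hxW : x ∉ W := fun h => hx 1 one_ne_zero (by simpa using h)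
    have hx0 : x ≠ 0 := fun h => hxW (h ▸ W.zero_mem)
    have hdisj : Disjoint W (K ∙ x) := (Submodule.disjoint_span_singleton' hx0).mpr hxW
    have hsup : finrank K ↥(W ⊔ (K ∙ x)) = finrank K W + 1 := by
      have h := Submodule.finrank_sup_add_finrank_inf_eq W (K ∙ x)
      rw [disjoint_iff.mp hdisj, finrank_bot, finrank_span_singleton hx0] at h
      omega
    obtain ⟨W', hle, hfr⟩ := ih (W ⊔ (K ∙ x)) (by rw [hsup]; omega)
    exact ⟨W', le_trans le_sup_left hle, by rw [hfr, hsup]; omega⟩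


/-- Lower bound for `q > 2`: if `U` is a rank-`ρ`-saturating `[n,k]_{q^m/q}` system
with `q > 2`, then `n ≥ ⌈mk/ρ⌉ - m + ρ`. -/
theorem lower_bound_q_gt_two (K L : Type*) [Field K] [Field L] [Algebra K L]
    [Fintype K] [Fintype L] {k n ρ : ℕ}
    (hq : 2 < Fintype.card K) (hρ : 1 ≤ ρ)
    (U : Submodule K (Fin k → L))
    (hdim : Module.finrank K U = n)
    (hspan : Submodule.span L (U : Set (Fin k → L)) = ⊤)
    (hsat : IsRankSat K U ρ) :
    (⌈((Module.finrank K L * k : ℕ) : ℚ) / (ρ : ℚ)⌉ - (Module.finrank K L : ℤ) + ρ)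
      ≤ (n : ℤ) := by
  classical
  set m := Module.finrank K L with hm
  set q := Fintype.card K with hqdef
  have hq3 : 3 ≤ q := hq
  have hm1 : 1 ≤ m := Module.finrank_pos
  have cardL : Fintype.card L = q ^ m := card_eq_pow_finrank
  haveI : Nonempty (Fin ρ) := ⟨⟨0, hρ⟩⟩
  -- ρ ≤ n
  have hcovn : RkCovers K U n := fun v =>
    ⟨U, le_rfl, by rw [hdim], by rw [hspan]; trivial⟩
  have hρn : ρ ≤ n := by
    by_contra h
    exact hsat.2 n (by omega) hcovn
  -- exact-dimension cover
  have hcov : ∀ v : Fin k → L, ∃ S : Submodule K (Fin k → L), S ≤ U ∧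
      Module.finrank K S = ρ ∧ v ∈ Submodule.span L (S : Set (Fin k → L)) := by
    intro v
    obtain ⟨S, hSU, hSr, hvS⟩ := hsat.1 v
    set W : Submodule K U := S.comap U.subtype with hWdef
    have hWr : finrank K W = finrank K S := (Submodule.comapSubtypeEquivOfLe hSU).finrank_eq
    obtain ⟨W', hWW', hW'r⟩ := sat_exists_ge_finrank_eq (ρ - finrank K S) W
      (by rw [hWr, hdim]; omega)
    refine ⟨W'.map U.subtype, Submodule.map_subtype_le U W', ?_, ?_⟩
    · have heq : finrank K (W'.map U.subtype) = finrank K W' :=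
        ((Submodule.equivMapOfInjective U.subtype (Submodule.injective_subtype U)
          W').finrank_eq).symm
      rw [heq, hW'r, hWr]
      omega
    · have hS : S = W.map U.subtype := by
        rw [hWdef, Submodule.map_comap_subtype]
        exact (inf_eq_right.mpr hSU).symm
      refine Submodule.span_mono ?_ hvS
      rw [hS]
      exact Submodule.map_mono hWW'
  -- the type of ρ-dimensional subspaces of U
  let T := {S : Submodule K (Fin k → L) // S ≤ U ∧ Module.finrank K S = ρ}
  haveI : Finite (Submodule K (Fin k → L)) :=
    Finite.of_injective (fun S => (S : Set (Fin k → L))) SetLike.coe_injective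
  haveI : Finite T := Subtype.finite
  let bS : ∀ S : T, Basis (Fin ρ) K S.1 := fun S => Module.finBasisOfFinrankEq K S.1 S.2.2
  -- surjection onto L^k
  let φ : T × (Fin ρ → L) → (Fin k → L) := fun p => ∑ i, p.2 i • ((bS p.1 i : Fin k → L))
  have hφ : Function.Surjective φ := by
    intro v
    obtain ⟨S, hSU, hSr, hvS⟩ := hcov v
    set St : T := ⟨S, hSU, hSr⟩ with hSt
    have hsp : Submodule.span K (Set.range fun i => ((bS St i : Fin k → L))) = S := by
      rw [sat_span_coe_range, (bS St).span_eq, Submodule.map_top, Submodule.range_subtype]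
    have hsub : (S : Set (Fin k → L)) ⊆
        (Submodule.span L (Set.range fun i => ((bS St i : Fin k → L))) : Set (Fin k → L)) := by
      intro x hx
      have : x ∈ Submodule.span K (Set.range fun i => ((bS St i : Fin k → L))) := by
        rw [hsp]; exact hx
      exact Submodule.span_le_restrictScalars K L _ this
    have hv' : v ∈ Submodule.span L (Set.range fun i => ((bS St i : Fin k → L))) :=
      Submodule.span_le.mpr hsub hvS
    obtain ⟨c, hc⟩ := (mem_span_range_iff_exists_fun L).mp hv'
    exact ⟨(St, c), hc⟩
  -- first cardinality inequality
  have h1 : q ^ (m * k) ≤ Nat.card T * q ^ (m * ρ) := by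
    have hle := Nat.card_le_card_of_surjective φ hφ
    rw [Nat.card_prod] at hle
    have e1 : Nat.card (Fin k → L) = q ^ (m * k) := by
      rw [Nat.card_eq_fintype_card, Fintype.card_fun, cardL, Fintype.card_fin, ← pow_mul]
    have e2 : Nat.card (Fin ρ → L) = q ^ (m * ρ) := by
      rw [Nat.card_eq_fintype_card, Fintype.card_fun, cardL, Fintype.card_fin, ← pow_mul]
    rw [e1, e2] at hle
    exact hle
  -- count of independent tuples in U
  let I := {f : Fin ρ → U // LinearIndependent K f}
  have cardI : Nat.card I = ∏ i : Fin ρ, (q ^ n - q ^ (i : ℕ)) := by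
    have hk : ρ ≤ finrank K U := by rw [hdim]; exact hρn
    rw [card_linearIndependent hk, hdim]
  -- the fiber map
  let π : I → T := fun f => ⟨Submodule.map U.subtype (Submodule.span K (Set.range f.1)),
    Submodule.map_subtype_le U _, by
      have heq : finrank K ((Submodule.span K (Set.range f.1)).map U.subtype)
          = finrank K (Submodule.span K (Set.range f.1)) :=
        ((Submodule.equivMapOfInjective U.subtype (Submodule.injective_subtype U)
          (Submodule.span K (Set.range f.1))).finrank_eq).symm
      rw [heq, finrank_span_eq_card f.2, Fintype.card_fin]⟩
  have hπ : Function.Surjective π := by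
    rintro ⟨S, hSU, hSr⟩
    let b : Basis (Fin ρ) K S := Module.finBasisOfFinrankEq K S hSr
    let f : Fin ρ → U := fun i => ⟨(b i : Fin k → L), hSU (b i).2⟩
    have hind : LinearIndependent K f := by
      apply LinearIndependent.of_comp U.subtype
      exact b.linearIndependent.map' S.subtype S.ker_subtype
    refine ⟨⟨f, hind⟩, Subtype.ext ?_⟩
    show Submodule.map U.subtype (Submodule.span K (Set.range f)) = S
    have himg : Submodule.map U.subtype (Submodule.span K (Set.range f)) =
        Submodule.span K (Set.range fun i => ((b i : Fin k → L))) := by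
      rw [Submodule.map_span, ← Set.range_comp]
      rfl
    rw [himg, sat_span_coe_range, b.span_eq, Submodule.map_top, Submodule.range_subtype]
  -- fiber cardinality
  have fibcard : ∀ S : T, Nat.card {f : I // π f = S} = ∏ i : Fin ρ, (q ^ ρ - q ^ (i : ℕ)) := by
    intro S
    have hfr : finrank K S.1 = ρ := S.2.2
    let e : {f : I // π f = S} ≃ {g : Fin ρ → S.1 // LinearIndependent K g} :=
      { toFun := fun f => ⟨fun i => ⟨(f.1.1 i : Fin k → L), by
          have hmem : ((f.1.1 i : Fin k → L)) ∈ (π f.1).1 :=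
            ⟨f.1.1 i, Submodule.subset_span (Set.mem_range_self i), rfl⟩
          rw [f.2] at hmem
          exact hmem⟩, by
          apply LinearIndependent.of_comp S.1.subtype
          exact f.1.2.map' U.subtype U.ker_subtype⟩
        invFun := fun g => ⟨⟨fun i => ⟨(g.1 i : Fin k → L), S.2.1 (g.1 i).2⟩, by
          apply LinearIndependent.of_comp U.subtype
          exact g.2.map' S.1.subtype S.1.ker_subtype⟩, by
          apply Subtype.ext
          show Submodule.map U.subtype (Submodule.span K (Set.range _)) = S.1
          have himg : Submodule.map U.subtype
              (Submodule.span K (Set.range fun i => (⟨(g.1 i : Fin k → L), S.2.1 (g.1 i).2⟩ : U))) =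
              Submodule.span K (Set.range fun i => ((g.1 i : Fin k → L))) := by
            rw [Submodule.map_span, ← Set.range_comp]
            rfl
          rw [himg, sat_span_coe_range,
            g.2.span_eq_top_of_card_eq_finrank (by rw [Fintype.card_fin, hfr]),
            Submodule.map_top, Submodule.range_subtype]⟩
        left_inv := fun f => by
          apply Subtype.ext
          apply Subtype.ext
          funext i
          rfl
        right_inv := fun g => by
          apply Subtype.ext
          funext i
          rfl }
    rw [Nat.card_congr e]
    have hk : ρ ≤ finrank K S.1 := le_of_eq hfr.symm
    rw [card_linearIndependent hk, hfr]
  -- total count over fibers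
  have hcardT : Nat.card I = Nat.card T * ∏ i : Fin ρ, (q ^ ρ - q ^ (i : ℕ)) := by
    haveI : Fintype T := Fintype.ofFinite T
    haveI : Finite I := Subtype.finite
    haveI : Fintype I := Fintype.ofFinite I
    haveI : ∀ S : T, Fintype {f : I // π f = S} := fun S => Fintype.ofFinite _
    rw [Nat.card_eq_fintype_card, ← Fintype.card_congr (Equiv.sigmaFiberEquiv π),
      Fintype.card_sigma]
    have : ∀ S : T, Fintype.card {f : I // π f = S} = ∏ i : Fin ρ, (q ^ ρ - q ^ (i : ℕ)) := by
      intro S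
      rw [← Nat.card_eq_fintype_card]
      exact fibcard S
    rw [Finset.sum_congr rfl fun S _ => this S, Finset.sum_const, Finset.card_univ,
      smul_eq_mul, Nat.card_eq_fintype_card]
  -- second inequality
  have h2 : Nat.card T * ∏ i ∈ Finset.range ρ, (q ^ ρ - q ^ i) ≤ q ^ (n * ρ) := by
    have := hcardT
    rw [cardI] at this
    have hprod : ∏ i : Fin ρ, (q ^ n - q ^ (i : ℕ)) ≤ q ^ (n * ρ) := by
      calc ∏ i : Fin ρ, (q ^ n - q ^ (i : ℕ)) ≤ ∏ _i : Fin ρ, q ^ n :=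
            Finset.prod_le_prod (fun _ _ => Nat.zero_le _) (fun _ _ => Nat.sub_le _ _)
        _ = q ^ (n * ρ) := by rw [Finset.prod_const, Finset.card_univ, Fintype.card_fin, ← pow_mul]
    have hfin : (∏ i ∈ Finset.range ρ, (q ^ ρ - q ^ i)) = ∏ i : Fin ρ, (q ^ ρ - q ^ (i : ℕ)) :=
      (Fin.prod_univ_eq_prod_range (fun i => q ^ ρ - q ^ i) ρ).symm
    rw [hfin, ← this]
    exact hprod
  -- combine
  have hmain : m * k + ρ * ρ ≤ n * ρ + m * ρ :=
    sat_combine hq3 h1 h2 (sat_prod_lower hq3 ρ)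
  -- conclude
  have hceil : (⌈((m * k : ℕ) : ℚ) / (ρ : ℚ)⌉ : ℤ) ≤ (n : ℤ) + m - ρ := by
    rw [Int.ceil_le]
    rw [div_le_iff₀ (by exact_mod_cast Nat.pos_of_ne_zero (by omega) : (0 : ℚ) < (ρ : ℚ))]
    have hc : ((m * k : ℕ) : ℚ) + ((ρ * ρ : ℕ) : ℚ) ≤ ((n * ρ : ℕ) : ℚ) + ((m * ρ : ℕ) : ℚ) := by
      exact_mod_cast hmain
    push_cast at hc ⊢
    nlinarith [hc]
  linarith [hceil]
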